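/- arXiv:2201.03204 — 9 statements merged into one kernel-verified Lean document; each statement's English description precedes it below -/
import Mathlib

section
/- Let ψ: ℝ → ℝ be defined by ψ(x) = -log(1 - x + x²/2) for 0 ≤ x ≤ 1, ψ(x) = log 2 for x ≥ 1, and ψ(x) = -ψ(-x) for x ≤ 0. Then for all x ∈ ℝ, -log(1 - x + x²/2) ≤ ψ(x) ≤ log(1 + x + x²/2). -/
lemma pos_m (x : ℝ) : 0 < 1 - x + x ^ 2 / 2 := by nlinarith [sq_nonneg (x - 1)]
lemma pos_p (x : ℝ) : 0 < 1 + x + x ^ 2 / 2 := by nlinarith [sq_nonneg (x + 1)]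

lemma neg_log_le_log {a b : ℝ} (ha : 0 < a) (h : 1 ≤ a * b) :
    -Real.log a ≤ Real.log b := by
  have hb : 0 < b := by nlinarith
  have h0 : (0:ℝ) ≤ Real.log (a * b) := Real.log_nonneg h
  rw [Real.log_mul ha.ne' hb.ne'] at h0
  linarith

/-- The truncation function ψ for the second-moment case satisfies the
sandwich inequality (3) of the paper. -/
theorem stmt_0 (ψ : ℝ → ℝ)
    (h1 : ∀ x : ℝ, 0 ≤ x → x ≤ 1 → ψ x = -Real.log (1 - x + x ^ 2 / 2))
    (h2 : ∀ x : ℝ, 1 ≤ x → ψ x = Real.log 2)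
    (h3 : ∀ x : ℝ, x ≤ 0 → ψ x = -ψ (-x)) :
    ∀ x : ℝ, -Real.log (1 - x + x ^ 2 / 2) ≤ ψ x ∧ ψ x ≤ Real.log (1 + x + x ^ 2 / 2) := by
  intro x
  rcases le_total x 0 with hx | hx
  · -- x ≤ 0
    rw [h3 x hx]
    rcases le_total (-x) 1 with hx1 | hx1
    · rw [h1 (-x) (by linarith) hx1]
      have e : 1 - -x + (-x) ^ 2 / 2 = 1 + x + x ^ 2 / 2 := by ring
      rw [e, neg_neg]
      refine ⟨neg_log_le_log (pos_m x) ?_, le_refl _⟩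
      nlinarith [sq_nonneg (x ^ 2)]
    · rw [h2 (-x) hx1]
      constructor
      · rw [neg_le_neg_iff]
        apply Real.log_le_log (by norm_num)
        nlinarith
      · have : -Real.log 2 = -Real.log (1/2)⁻¹ := by norm_num
        rw [this, Real.log_inv, neg_neg]
        apply Real.log_le_log (by norm_num)
        nlinarith [sq_nonneg (x + 1)]
  · rcases le_total x 1 with hx1 | hx1
    · rw [h1 x hx hx1]
      refine ⟨le_refl _, ?_⟩
      have := neg_log_le_log (pos_m x) (b := 1 + x + x ^ 2 / 2)
        (by nlinarith [sq_nonneg (x ^ 2)])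
      linarith
    · rw [h2 x hx1]
      constructor
      · have : -Real.log (1 - x + x ^ 2 / 2) ≤ -Real.log (1/2) := by
          rw [neg_le_neg_iff]
          apply Real.log_le_log (by norm_num)
          nlinarith [sq_nonneg (x - 1)]
        rw [Real.log_div (by norm_num) (by norm_num)] at this
        simpa using this
      · apply Real.log_le_log (by norm_num)
        nlinarith
end

section
/- Fix θ ∈ (1,2). Let ψ: ℝ → ℝ be defined by ψ(x) = -log(1 - x + |x|^θ/θ) for 0 ≤ x ≤ 1, ψ(x) = log θ for x ≥ 1, and ψ(x) = -ψ(-x) for x ≤ 0. Then for all x ∈ ℝ, -log(1 - x + |x|^θ/θ) ≤ ψ(x) ≤ log(1 + x + |x|^θ/θ). -/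
open Real

/-- Bernoulli: `θ(1 - t + t^θ/θ) = θ - θt + t^θ ≥ 1` for `t ≥ 0`, `θ ≥ 1`. -/
private lemma aux1 {θ : ℝ} (hθ1 : 1 < θ) {t : ℝ} (ht : 0 ≤ t) :
    1 ≤ θ * (1 - t + t ^ θ / θ) := by
  have hθ0 : (0:ℝ) < θ := by linarith
  have h := one_add_mul_self_le_rpow_one_add (by linarith : (-1:ℝ) ≤ t - 1) hθ1.le
  rw [show (1 + (t - 1)) = t by ring] at h
  have hexp : θ * (1 - t + t ^ θ / θ) = θ - θ * t + t ^ θ := by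
    field_simp
  nlinarith [h]

private lemma aux1' {θ : ℝ} (hθ1 : 1 < θ) {t : ℝ} (ht : 0 ≤ t) :
    0 < 1 - t + t ^ θ / θ := by
  have hθ0 : (0:ℝ) < θ := by linarith
  nlinarith [aux1 hθ1 ht]

/-- For `0 ≤ t ≤ 1`: `(1 - t + t^θ/θ)(1 + t + t^θ/θ) ≥ 1`. -/
private lemma aux2 {θ : ℝ} (hθ1 : 1 < θ) (hθ2 : θ < 2) {t : ℝ} (ht : 0 ≤ t) (ht1 : t ≤ 1) :
    1 ≤ (1 - t + t ^ θ / θ) * (1 + t + t ^ θ / θ) := by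
  have hθ0 : (0:ℝ) < θ := by linarith
  have hA : t * t ≤ t ^ θ := by
    rcases eq_or_lt_of_le ht with h0 | h0
    · rw [← h0, Real.zero_rpow (by positivity : θ ≠ 0)]; norm_num
    · have h2 : t ^ (2:ℝ) ≤ t ^ θ := Real.rpow_le_rpow_of_exponent_ge h0 ht1 hθ2.le
      rwa [show (2:ℝ) = ((2:ℕ):ℝ) by norm_num, Real.rpow_natCast, pow_two] at h2
  have hA0 : 0 ≤ t ^ θ := Real.rpow_nonneg ht θ
  have h2u : t * t ≤ 2 * (t ^ θ / θ) := by
    rw [mul_div_assoc']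
    rw [le_div_iff₀ hθ0]
    nlinarith
  nlinarith [sq_nonneg (t ^ θ / θ)]

/-- The truncation function ψ for the θ-th moment case (1 < θ < 2) satisfies the
sandwich inequality. -/
theorem stmt_2 (θ : ℝ) (hθ1 : 1 < θ) (hθ2 : θ < 2) (ψ : ℝ → ℝ)
    (h1 : ∀ x : ℝ, 0 ≤ x → x ≤ 1 → ψ x = -Real.log (1 - x + |x| ^ θ / θ))
    (h2 : ∀ x : ℝ, 1 ≤ x → ψ x = Real.log θ)
    (h3 : ∀ x : ℝ, x ≤ 0 → ψ x = -ψ (-x)) :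
    ∀ x : ℝ, -Real.log (1 - x + |x| ^ θ / θ) ≤ ψ x ∧ ψ x ≤ Real.log (1 + x + |x| ^ θ / θ) := by
  have hθ0 : (0:ℝ) < θ := by linarith
  intro x
  rcases le_or_gt 0 x with hx | hx
  · -- x ≥ 0
    have habs : |x| = x := abs_of_nonneg hx
    have hA0 : 0 ≤ x ^ θ / θ := by positivity
    have hf : 0 < 1 - x + x ^ θ / θ := aux1' hθ1 hx
    have hg : 0 < 1 + x + x ^ θ / θ := by linarith
    rcases le_or_gt x 1 with hx1 | hx1
    · -- 0 ≤ x ≤ 1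
      rw [h1 x hx hx1, habs]
      refine ⟨le_refl _, ?_⟩
      rw [← Real.log_inv]
      apply Real.log_le_log (by positivity)
      rw [inv_le_iff_one_le_mul₀ hf]
      calc (1:ℝ) ≤ (1 - x + x ^ θ / θ) * (1 + x + x ^ θ / θ) := aux2 hθ1 hθ2 hx hx1
        _ = (1 + x + x ^ θ / θ) * (1 - x + x ^ θ / θ) := by ring
    · -- x ≥ 1
      rw [h2 x hx1.le, habs]
      constructor
      · rw [← Real.log_inv]
        apply Real.log_le_log (by positivity)
        rw [inv_le_iff_one_le_mul₀ hf]
        exact aux1 hθ1 hx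
      · exact Real.log_le_log hθ0 (by linarith)
  · -- x < 0
    have ht : (0:ℝ) ≤ -x := by linarith
    have habs : |x| = -x := abs_of_neg hx
    have hA0 : 0 ≤ (-x) ^ θ / θ := by positivity
    have hF : 0 < 1 - (-x) + (-x) ^ θ / θ := aux1' hθ1 ht
    have hG : 0 < 1 + (-x) + (-x) ^ θ / θ := by linarith
    have e1 : (1:ℝ) - x + |x| ^ θ / θ = 1 + (-x) + (-x) ^ θ / θ := by rw [habs]; ring
    have e2 : (1:ℝ) + x + |x| ^ θ / θ = 1 - (-x) + (-x) ^ θ / θ := by rw [habs]; ring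
    rw [e1, e2, h3 x hx.le]
    rcases le_or_gt (-x) 1 with hy1 | hy1
    · -- -1 ≤ x < 0
      have hψ : ψ (-x) = -Real.log (1 - (-x) + (-x) ^ θ / θ) := by
        rw [h1 (-x) ht hy1, abs_of_nonneg ht]
      rw [hψ, neg_neg]
      refine ⟨?_, le_refl _⟩
      rw [← Real.log_inv]
      apply Real.log_le_log (by positivity)
      rw [inv_le_iff_one_le_mul₀ hG]
      calc (1:ℝ) ≤ (1 - (-x) + (-x) ^ θ / θ) * (1 + (-x) + (-x) ^ θ / θ) :=
            aux2 hθ1 hθ2 ht hy1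
        _ = (1 - (-x) + (-x) ^ θ / θ) * (1 + -x + (-x) ^ θ / θ) := by ring
    · -- x < -1
      rw [h2 (-x) hy1.le]
      constructor
      · rw [neg_le_neg_iff]
        exact Real.log_le_log hθ0 (by linarith)
      · rw [← Real.log_inv]
        apply Real.log_le_log (by positivity)
        rw [inv_le_iff_one_le_mul₀ hθ0, mul_comm]
        exact aux1 hθ1 ht
end

section
/- Let (x_i, y_i), i = 1,…,n, be i.i.d. samples from a distribution D on ℝ^d × ℝ, let ι > 0, let w ∈ ℝ^d be fixed, and let ψ satisfy ψ(t) ≤ log(1 + t + t²/2) for all t ≥ 0. Then E[exp(Σ_{i=1}^n ψ(ι|y_i - ⟨x_i, w⟩|))] ≤ exp(n(ι L(w) + (ι²/2) E(y - ⟨x, w⟩)²)), where L(w) = E|y - ⟨x, w⟩|. -/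
open MeasureTheory
open scoped RealInnerProductSpace

/-- MGF upper bound for the truncated empirical risk (second-moment case). -/
theorem stmt_10 {d n : ℕ} {Ω : Type*} [MeasurableSpace Ω] (μ : Measure Ω)
    [IsProbabilityMeasure μ] (X : Ω → EuclideanSpace ℝ (Fin d)) (Y : Ω → ℝ)
    (hXm : Measurable X) (hYm : Measurable Y)
    (w : EuclideanSpace ℝ (Fin d)) (ι : ℝ) (hι : 0 < ι) (ψ : ℝ → ℝ)
    (hψ : ∀ t : ℝ, 0 ≤ t → ψ t ≤ Real.log (1 + t + t ^ 2 / 2))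
    (hL : Integrable (fun ω => |Y ω - ⟪X ω, w⟫|) μ)
    (h2 : Integrable (fun ω => (Y ω - ⟪X ω, w⟫) ^ 2) μ) :
    (∫ ω : Fin n → Ω, Real.exp (∑ i, ψ (ι * |Y (ω i) - ⟪X (ω i), w⟫|))
        ∂(Measure.pi fun _ => μ)) ≤
      Real.exp (n * (ι * (∫ ω, |Y ω - ⟪X ω, w⟫| ∂μ) +
        ι ^ 2 / 2 * ∫ ω, (Y ω - ⟪X ω, w⟫) ^ 2 ∂μ)) := by
  letI : MeasureSpace Ω := ⟨μ⟩
  set Z : Ω → ℝ := fun ω => Y ω - ⟪X ω, w⟫ with hZ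
  set h : Ω → ℝ := fun ω => 1 + ι * |Z ω| + ι ^ 2 / 2 * (Z ω) ^ 2 with hh
  have hhi : Integrable h μ := by
    apply Integrable.add
    · exact (integrable_const 1).add (hL.const_mul ι)
    · exact h2.const_mul _
  have hpt : ∀ t : ℝ, 0 ≤ t → Real.exp (ψ t) ≤ 1 + t + t ^ 2 / 2 := by
    intro t ht
    have hpos : (0:ℝ) < 1 + t + t ^ 2 / 2 := by positivity
    calc Real.exp (ψ t) ≤ Real.exp (Real.log (1 + t + t ^ 2 / 2)) :=
          Real.exp_le_exp.mpr (hψ t ht)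
      _ = 1 + t + t ^ 2 / 2 := Real.exp_log hpos
  have key : (∫ ω : Fin n → Ω, Real.exp (∑ i, ψ (ι * |Z (ω i)|))
      ∂(Measure.pi fun _ => μ)) ≤ ∫ ω : Fin n → Ω, ∏ i, h (ω i)
      ∂(Measure.pi fun _ => μ) := by
    apply integral_mono_of_nonneg
    · filter_upwards with ω using (Real.exp_pos _).le
    · have heq : Measure.pi (fun _ : Fin n => μ) = (volume : Measure (Fin n → Ω)) :=
        (MeasureTheory.volume_pi).symm
      rw [heq]
      exact Integrable.fintype_prod (fun _ => hhi)
    · filter_upwards with ω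
      rw [Real.exp_sum]
      apply Finset.prod_le_prod (fun i _ => (Real.exp_pos _).le)
      intro i _
      have h0 : (0:ℝ) ≤ ι * |Z (ω i)| := by positivity
      calc Real.exp (ψ (ι * |Z (ω i)|)) ≤ 1 + ι * |Z (ω i)| + (ι * |Z (ω i)|) ^ 2 / 2 :=
            hpt _ h0
        _ = h (ω i) := by
            simp only [hh]
            rw [mul_pow, sq_abs]
            ring
  have hfub : (∫ ω : Fin n → Ω, ∏ i, h (ω i) ∂(Measure.pi fun _ => μ))
      = (∫ ω, h ω ∂μ) ^ n := by
    have heq : Measure.pi (fun _ : Fin n => μ) = (volume : Measure (Fin n → Ω)) :=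
      (MeasureTheory.volume_pi).symm
    rw [heq]
    have := MeasureTheory.integral_fintype_prod_volume_eq_pow (ι := Fin n) h
    rwa [Fintype.card_fin] at this
  have hLnn : 0 ≤ ∫ ω, |Z ω| ∂μ := integral_nonneg fun ω => abs_nonneg _
  have h2nn : 0 ≤ ∫ ω, (Z ω) ^ 2 ∂μ := integral_nonneg fun ω => sq_nonneg _
  have hint : (∫ ω, h ω ∂μ)
      = 1 + (ι * ∫ ω, |Z ω| ∂μ + ι ^ 2 / 2 * ∫ ω, (Z ω) ^ 2 ∂μ) := by
    have hA : Integrable (fun ω => 1 + ι * |Z ω|) μ := (integrable_const 1).add (hL.const_mul ι)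
    have hB : Integrable (fun ω => ι ^ 2 / 2 * (Z ω) ^ 2) μ := h2.const_mul _
    simp only [hh]
    rw [integral_add hA hB, integral_add (integrable_const 1) (hL.const_mul ι),
      integral_const, integral_const_mul, integral_const_mul]
    simp only [measure_univ, probReal_univ, ENNReal.toReal_one, smul_eq_mul, mul_one, one_mul]
    ring
  calc (∫ ω : Fin n → Ω, Real.exp (∑ i, ψ (ι * |Z (ω i)|)) ∂(Measure.pi fun _ => μ))
      ≤ (∫ ω, h ω ∂μ) ^ n := by rw [← hfub]; exact key
    _ ≤ (Real.exp (ι * (∫ ω, |Z ω| ∂μ) + ι ^ 2 / 2 * ∫ ω, (Z ω) ^ 2 ∂μ)) ^ n := by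
        apply pow_le_pow_left₀
        · rw [hint]; positivity
        · rw [hint]; exact Real.add_one_le_exp _ |>.trans_eq' (by ring_nf)
    _ = Real.exp (n * (ι * (∫ ω, |Z ω| ∂μ) + ι ^ 2 / 2 * ∫ ω, (Z ω) ^ 2 ∂μ)) := by
        rw [← Real.exp_nat_mul]
end

section
/- Let (x_i, y_i), i = 1,…,n, be i.i.d. samples from D, let ι > 0, let w be fixed, and let ψ satisfy ψ(t) ≥ -log(1 - t + t²/2) for all t ≥ 0. Then E[exp(-Σ_{i=1}^n ψ(ι|y_i - ⟨x_i, w⟩|))] ≤ exp(n(-ι L(w) + (ι²/2) E(y - ⟨x, w⟩)²)), where L(w) = E|y - ⟨x, w⟩|. -/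
open MeasureTheory
open scoped RealInnerProductSpace

/-- `1 - t + t^2/2 > 0` for all real `t`. -/
lemma quad_pos (t : ℝ) : 0 < 1 - t + t ^ 2 / 2 := by nlinarith [sq_nonneg (t - 1)]

/-- MGF bound for minus the truncated empirical risk (second-moment case). -/
theorem stmt_11 {d n : ℕ} {Ω : Type*} [MeasurableSpace Ω] (μ : Measure Ω)
    [IsProbabilityMeasure μ] (X : Ω → EuclideanSpace ℝ (Fin d)) (Y : Ω → ℝ)
    (hXm : Measurable X) (hYm : Measurable Y)
    (w : EuclideanSpace ℝ (Fin d)) (ι : ℝ) (hι : 0 < ι) (ψ : ℝ → ℝ)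
    (hψ : ∀ t : ℝ, 0 ≤ t → -Real.log (1 - t + t ^ 2 / 2) ≤ ψ t)
    (hL : Integrable (fun ω => |Y ω - ⟪X ω, w⟫|) μ)
    (h2 : Integrable (fun ω => (Y ω - ⟪X ω, w⟫) ^ 2) μ) :
    (∫ ω : Fin n → Ω, Real.exp (-∑ i, ψ (ι * |Y (ω i) - ⟪X (ω i), w⟫|))
        ∂(Measure.pi fun _ => μ)) ≤
      Real.exp (n * (-(ι * ∫ ω, |Y ω - ⟪X ω, w⟫| ∂μ) +
        ι ^ 2 / 2 * ∫ ω, (Y ω - ⟪X ω, w⟫) ^ 2 ∂μ)) := by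
  letI : MeasureSpace Ω := ⟨μ⟩
  set Z : Ω → ℝ := fun ω => Y ω - ⟪X ω, w⟫ with hZ
  set g : Ω → ℝ := fun ω => 1 - ι * |Z ω| + (ι * |Z ω|) ^ 2 / 2 with hg
  -- pointwise bound for one factor
  have hbd : ∀ ω, Real.exp (-ψ (ι * |Z ω|)) ≤ g ω := by
    intro ω
    have ht : (0:ℝ) ≤ ι * |Z ω| := mul_nonneg hι.le (abs_nonneg _)
    have h1 := hψ _ ht
    calc Real.exp (-ψ (ι * |Z ω|))
        ≤ Real.exp (Real.log (1 - ι * |Z ω| + (ι * |Z ω|) ^ 2 / 2)) :=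
          Real.exp_le_exp.2 (by linarith)
      _ = g ω := Real.exp_log (quad_pos _)
  -- integrability of g
  have hgeq : ∀ ω, g ω = 1 - ι * |Z ω| + ι ^ 2 / 2 * Z ω ^ 2 := by
    intro ω; simp only [hg]; rw [mul_pow, sq_abs]; ring
  have hgi : Integrable g μ := by
    have : Integrable (fun ω => 1 - ι * |Z ω| + ι ^ 2 / 2 * Z ω ^ 2) μ :=
      ((integrable_const 1).sub (hL.const_mul ι)).add (h2.const_mul _)
    exact this.congr (Filter.Eventually.of_forall fun ω => (hgeq ω).symm)
  have hgint : ∫ ω, g ω ∂μ = 1 + (-(ι * ∫ ω, |Z ω| ∂μ) + ι ^ 2 / 2 * ∫ ω, Z ω ^ 2 ∂μ) := by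
    have hA : Integrable (fun ω => 1 - ι * |Z ω|) μ := (integrable_const 1).sub (hL.const_mul ι)
    have hB : Integrable (fun ω => ι ^ 2 / 2 * Z ω ^ 2) μ := h2.const_mul _
    have hC : Integrable (fun _ : Ω => (1:ℝ)) μ := integrable_const 1
    have hD : Integrable (fun ω => ι * |Z ω|) μ := hL.const_mul ι
    simp_rw [hgeq]
    rw [integral_add hA hB, integral_sub hC hD, integral_const, integral_const_mul,
        integral_const_mul]
    simp [sub_eq_add_neg]
    ring
  -- main chain
  have key : (∫ ω : Fin n → Ω, Real.exp (-∑ i, ψ (ι * |Z (ω i)|)) ∂(Measure.pi fun _ => μ))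
      ≤ (∫ ω, g ω ∂μ) ^ n := by
    have hpi : (Measure.pi fun _ : Fin n => μ) = (volume : Measure (Fin n → Ω)) := rfl
    rw [hpi]
    calc (∫ ω : Fin n → Ω, Real.exp (-∑ i, ψ (ι * |Z (ω i)|)))
        ≤ ∫ ω : Fin n → Ω, ∏ i, g (ω i) := by
          refine integral_mono_of_nonneg (Filter.Eventually.of_forall fun ω => (Real.exp_pos _).le)
            (Integrable.fintype_prod (f := fun _ : Fin n => g) fun _ => hgi)
            (Filter.Eventually.of_forall fun ω => ?_)
          dsimp only
          have : Real.exp (-∑ i, ψ (ι * |Z (ω i)|)) = ∏ i, Real.exp (-ψ (ι * |Z (ω i)|)) := by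
            rw [← Real.exp_sum]
            simp [Finset.sum_neg_distrib]
          rw [this]
          exact Finset.prod_le_prod (fun i _ => (Real.exp_pos _).le) fun i _ => hbd _
      _ = (∫ ω, g ω) ^ n := by
          simpa using MeasureTheory.integral_fintype_prod_volume_eq_pow (ι := Fin n) g
  refine key.trans ?_
  have hnn : 0 ≤ ∫ ω, g ω ∂μ := integral_nonneg fun ω => (quad_pos _).le
  calc (∫ ω, g ω ∂μ) ^ n
      ≤ (Real.exp (-(ι * ∫ ω, |Z ω| ∂μ) + ι ^ 2 / 2 * ∫ ω, Z ω ^ 2 ∂μ)) ^ n := by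
        apply pow_le_pow_left₀ hnn
        rw [hgint, add_comm]
        exact Real.add_one_le_exp _
    _ = Real.exp (n * (-(ι * ∫ ω, |Z ω| ∂μ) + ι ^ 2 / 2 * ∫ ω, Z ω ^ 2 ∂μ)) := by
        rw [← Real.exp_nat_mul]
end

section
/- Let (x_i, y_i), i = 1,…,n, be i.i.d. from D, ι > 0, w fixed, θ ∈ (1,2), and ψ satisfy ψ(t) ≥ -log(1 - t + t^θ/θ) for t ≥ 0. Then E[exp(-Σ_{i=1}^n ψ(ι|y_i - ⟨x_i, w⟩|))] ≤ exp(n(-ι L(w) + (ι^θ/θ) E|y - ⟨x, w⟩|^θ)). -/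
open MeasureTheory
open scoped RealInnerProductSpace

/-- MGF bound for minus the truncated empirical risk (θ-th moment case). -/
theorem stmt_12 {d n : ℕ} {Ω : Type*} [MeasurableSpace Ω] (μ : Measure Ω)
    [IsProbabilityMeasure μ] (X : Ω → EuclideanSpace ℝ (Fin d)) (Y : Ω → ℝ)
    (hXm : Measurable X) (hYm : Measurable Y)
    (w : EuclideanSpace ℝ (Fin d)) (ι θ : ℝ) (hι : 0 < ι)
    (hθ1 : 1 < θ) (hθ2 : θ < 2) (ψ : ℝ → ℝ)
    (hψ : ∀ t : ℝ, 0 ≤ t → -Real.log (1 - t + t ^ θ / θ) ≤ ψ t)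
    (hL : Integrable (fun ω => |Y ω - ⟪X ω, w⟫|) μ)
    (hθint : Integrable (fun ω => |Y ω - ⟪X ω, w⟫| ^ θ) μ) :
    (∫ ω : Fin n → Ω, Real.exp (-∑ i, ψ (ι * |Y (ω i) - ⟪X (ω i), w⟫|))
        ∂(Measure.pi fun _ => μ)) ≤
      Real.exp (n * (-(ι * ∫ ω, |Y ω - ⟪X ω, w⟫| ∂μ) +
        ι ^ θ / θ * ∫ ω, |Y ω - ⟪X ω, w⟫| ^ θ ∂μ)) := by
  have hθ0 : (0:ℝ) < θ := by linarith
  set Z : Ω → ℝ := fun ω => |Y ω - ⟪X ω, w⟫| with hZ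
  have hZ0 : ∀ ω, 0 ≤ Z ω := fun ω => abs_nonneg _
  set g : ℝ → ℝ := fun t => 1 - t + t ^ θ / θ with hg
  -- positivity of g on [0, ∞)
  have hgpos : ∀ t : ℝ, 0 ≤ t → 0 < g t := by
    intro t ht
    have hbern : 1 + θ * (t - 1) ≤ (1 + (t - 1)) ^ θ :=
      one_add_mul_self_le_rpow_one_add (by linarith) hθ1.le
    have h1 : 1 + (t - 1) = t := by ring
    rw [h1] at hbern
    have h3 : (1 + θ * (t - 1)) / θ ≤ t ^ θ / θ := by gcongr
    have h2 : (1 + θ * (t - 1)) / θ = 1/θ + t - 1 := by field_simp; ring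
    rw [h2] at h3
    have h4 : 0 < 1/θ := by positivity
    simp only [hg]
    linarith
  -- pointwise bound exp (-ψ t) ≤ g t
  have hpt : ∀ t : ℝ, 0 ≤ t → Real.exp (-ψ t) ≤ g t := by
    intro t ht
    have := hψ t ht
    calc Real.exp (-ψ t) ≤ Real.exp (Real.log (g t)) :=
          Real.exp_le_exp.2 (by linarith)
      _ = g t := Real.exp_log (hgpos t ht)
  -- rewrite g ∘ (ι * Z) as explicit integrable function
  have hmul : ∀ ω, g (ι * Z ω) = 1 - ι * Z ω + ι ^ θ * Z ω ^ θ / θ := by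
    intro ω
    simp only [hg, Real.mul_rpow hι.le (hZ0 ω)]
  have hZm : Measurable Z := (hYm.sub (Measurable.inner hXm measurable_const)).abs
  have hA : Integrable (fun ω : Ω => 1 - ι * Z ω) μ :=
    (integrable_const 1).sub (hL.const_mul ι)
  have hB : Integrable (fun ω : Ω => ι ^ θ * Z ω ^ θ / θ) μ :=
    (hθint.const_mul (ι ^ θ)).div_const θ
  have hint1 : Integrable (fun ω => g (ι * Z ω)) μ := by
    simp only [hmul]
    exact hA.add hB
  -- value of the one-dimensional integral
  have hval : ∫ ω, g (ι * Z ω) ∂μ =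
      1 + (-(ι * ∫ ω, Z ω ∂μ) + ι ^ θ / θ * ∫ ω, Z ω ^ θ ∂μ) := by
    simp only [hmul]
    rw [integral_add hA hB,
      integral_sub (integrable_const 1) (hL.const_mul ι), integral_const,
      integral_const_mul, integral_div, integral_const_mul]
    simp [measure_univ]
    ring
  have hintnn : 0 ≤ ∫ ω, g (ι * Z ω) ∂μ :=
    integral_nonneg fun ω => (hgpos _ (by positivity)).le
  letI : MeasureSpace Ω := ⟨μ⟩
  have key : (∫ ω : Fin n → Ω, Real.exp (-∑ i, ψ (ι * Z (ω i)))
      ∂(Measure.pi fun _ => μ)) ≤ (∫ ω, g (ι * Z ω) ∂μ) ^ n := by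
    have hprod : Integrable (fun ω : Fin n → Ω => ∏ i, g (ι * Z (ω i)))
        (Measure.pi fun _ => μ) :=
      Integrable.fintype_prod (f := fun (_ : Fin n) (t : Ω) => g (ι * Z t)) fun _ => hint1
    have hmono : (∫ ω : Fin n → Ω, Real.exp (-∑ i, ψ (ι * Z (ω i)))
        ∂(Measure.pi fun _ => μ)) ≤
        ∫ ω : Fin n → Ω, ∏ i, g (ι * Z (ω i)) ∂(Measure.pi fun _ => μ) := by
      apply integral_mono_of_nonneg
      · filter_upwards with ω using (Real.exp_pos _).le
      · exact hprod
      · filter_upwards with ω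
        rw [← Finset.sum_neg_distrib, Real.exp_sum]
        exact Finset.prod_le_prod (fun i _ => (Real.exp_pos _).le)
          (fun i _ => hpt _ (by positivity))
    have heq : (∫ ω : Fin n → Ω, ∏ i, g (ι * Z (ω i)) ∂(Measure.pi fun _ => μ))
        = (∫ ω, g (ι * Z ω) ∂μ) ^ n := by
      have := MeasureTheory.integral_fintype_prod_eq_pow (𝕜 := ℝ) (ι := Fin n)
        (fun t : Ω => g (ι * Z t)) (μ := μ)
      simpa using this
    exact hmono.trans heq.le
  refine key.trans ?_
  rw [hval]
  calc (1 + (-(ι * ∫ ω, Z ω ∂μ) + ι ^ θ / θ * ∫ ω, Z ω ^ θ ∂μ)) ^ n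
      ≤ (Real.exp (-(ι * ∫ ω, Z ω ∂μ) + ι ^ θ / θ * ∫ ω, Z ω ^ θ ∂μ)) ^ n := by
        apply pow_le_pow_left₀ (by rw [← hval]; exact hintnn)
        linarith [Real.add_one_le_exp (-(ι * ∫ ω, Z ω ∂μ) + ι ^ θ / θ * ∫ ω, Z ω ^ θ ∂μ)]
    _ = Real.exp (n * (-(ι * ∫ ω, Z ω ∂μ) + ι ^ θ / θ * ∫ ω, Z ω ^ θ ∂μ)) := by
        rw [← Real.exp_nat_mul]
end

section
/- Let (x_i, y_i), i = 1,…,n, be i.i.d. samples from D, let ι > 0, w fixed, and let ψ satisfy ψ(t) ≤ log(1 + t + t²/2) for t ≥ 0. Then for any η ∈ (0,1), with probability at least 1 - η, (1/(nι)) Σ_{i=1}^n ψ(ι|y_i - ⟨x_i, w⟩|) ≤ L(w) + (ι/2) E(y - ⟨x, w⟩)² + (1/(nι)) log(1/η). -/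
open MeasureTheory
open scoped RealInnerProductSpace

/-- One-sided concentration (upper) for the truncated empirical risk. -/
theorem stmt_13 {d : ℕ} (n : ℕ) (hn : 0 < n) {Ω : Type*} [MeasurableSpace Ω]
    (μ : Measure Ω) [IsProbabilityMeasure μ]
    (X : Ω → EuclideanSpace ℝ (Fin d)) (Y : Ω → ℝ)
    (hXm : Measurable X) (hYm : Measurable Y)
    (w : EuclideanSpace ℝ (Fin d)) (ι : ℝ) (hι : 0 < ι) (ψ : ℝ → ℝ)
    (hψ : ∀ t : ℝ, 0 ≤ t → ψ t ≤ Real.log (1 + t + t ^ 2 / 2))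
    (hL : Integrable (fun ω => |Y ω - ⟪X ω, w⟫|) μ)
    (h2 : Integrable (fun ω => (Y ω - ⟪X ω, w⟫) ^ 2) μ)
    (η : ℝ) (hη0 : 0 < η) (hη1 : η < 1) :
    ENNReal.ofReal (1 - η) ≤
      (Measure.pi fun _ : Fin n => μ)
        {ω | (1 / (n * ι)) * ∑ i, ψ (ι * |Y (ω i) - ⟪X (ω i), w⟫|) ≤
          (∫ ω', |Y ω' - ⟪X ω', w⟫| ∂μ) +
          ι / 2 * (∫ ω', (Y ω' - ⟪X ω', w⟫) ^ 2 ∂μ) +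
          (1 / (n * ι)) * Real.log (1 / η)} := by
  letI : MeasureSpace Ω := ⟨μ⟩
  haveI hvol : IsProbabilityMeasure (volume : Measure Ω) := ‹IsProbabilityMeasure μ›
  have hnι : (0:ℝ) < (n : ℝ) * ι := mul_pos (by exact_mod_cast hn) hι
  set L : ℝ := ∫ ω', |Y ω' - ⟪X ω', w⟫| ∂μ with hLdef
  set M : ℝ := ∫ ω', (Y ω' - ⟪X ω', w⟫) ^ 2 ∂μ with hMdef
  have hL0 : 0 ≤ L := integral_nonneg fun ω => abs_nonneg _
  have hM0 : 0 ≤ M := integral_nonneg fun ω => sq_nonneg _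
  set s : ℝ := ι * L + ι ^ 2 / 2 * M with hsdef
  have hs0 : 0 ≤ s := by positivity
  set a : ℝ := (n : ℝ) * s + Real.log (1 / η) with hadef
  set g₁ : Ω → ℝ := fun ω =>
    1 + ι * |Y ω - ⟪X ω, w⟫| + ι ^ 2 / 2 * (Y ω - ⟪X ω, w⟫) ^ 2 with hg₁def
  have hg₁ge1 : ∀ ω, 1 ≤ g₁ ω := by
    intro ω
    have h1 : 0 ≤ ι * |Y ω - ⟪X ω, w⟫| := by positivity
    have h2' : 0 ≤ ι ^ 2 / 2 * (Y ω - ⟪X ω, w⟫) ^ 2 := by positivity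
    simp only [hg₁def]; linarith
  have hg₁pos : ∀ ω, 0 < g₁ ω := fun ω => lt_of_lt_of_le one_pos (hg₁ge1 ω)
  have hψg : ∀ ω, ψ (ι * |Y ω - ⟪X ω, w⟫|) ≤ Real.log (g₁ ω) := by
    intro ω
    have h := hψ (ι * |Y ω - ⟪X ω, w⟫|) (by positivity)
    have heq : 1 + ι * |Y ω - ⟪X ω, w⟫| + (ι * |Y ω - ⟪X ω, w⟫|) ^ 2 / 2 = g₁ ω := by
      simp only [hg₁def]
      rw [mul_pow, sq_abs]; ring
    rwa [heq] at h
  have i1 : Integrable (fun ω => 1 + ι * |Y ω - ⟪X ω, w⟫|) μ :=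
    (integrable_const 1).add (hL.const_mul ι)
  have i2 : Integrable (fun ω => ι ^ 2 / 2 * (Y ω - ⟪X ω, w⟫) ^ 2) μ :=
    h2.const_mul (ι ^ 2 / 2)
  have hg₁int : Integrable g₁ μ := i1.add i2
  have hg₁val : ∫ ω, g₁ ω ∂μ = 1 + s := by
    have e1 : ∫ ω, g₁ ω ∂μ = (∫ ω, (1 + ι * |Y ω - ⟪X ω, w⟫|) ∂μ) +
        ∫ ω, ι ^ 2 / 2 * (Y ω - ⟪X ω, w⟫) ^ 2 ∂μ := integral_add i1 i2
    have e2 : (∫ ω, (1 + ι * |Y ω - ⟪X ω, w⟫|) ∂μ) = (∫ _ω, (1:ℝ) ∂μ) +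
        ∫ ω, ι * |Y ω - ⟪X ω, w⟫| ∂μ := integral_add (integrable_const 1) (hL.const_mul ι)
    rw [e1, e2, integral_const_mul, integral_const_mul, integral_const]
    simp only [measure_univ, probReal_univ, ENNReal.toReal_one, smul_eq_mul, one_mul, mul_one]
    rw [hsdef, ← hLdef, ← hMdef]; ring
  -- integrability and value of the product over the pi measure
  have hGint : Integrable (fun x : Fin n → Ω => ∏ i, g₁ (x i)) :=
    Integrable.fintype_prod (f := fun _ : Fin n => g₁) fun _ => hg₁int
  have hGval : (∫ x : Fin n → Ω, ∏ i, g₁ (x i)) = (1 + s) ^ n := by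
    rw [volume_pi, integral_fintype_prod_eq_pow g₁, Fintype.card_fin]
    have : (∫ x, g₁ x) = 1 + s := hg₁val
    rw [this]
  -- Markov / Chernoff step
  have hGnonneg : (0 : (Fin n → Ω) → ℝ) ≤ᵐ[volume] fun x => ∏ i, g₁ (x i) :=
    Filter.Eventually.of_forall fun x =>
      Finset.prod_nonneg fun i _ => (hg₁pos (x i)).le
  have hmarkov := mul_meas_ge_le_integral_of_nonneg hGnonneg hGint (Real.exp a)
  rw [hGval] at hmarkov
  have hpow : (1 + s) ^ n ≤ Real.exp ((n : ℝ) * s) := by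
    rw [Real.exp_nat_mul]
    exact pow_le_pow_left₀ (by linarith) (by linarith [Real.add_one_le_exp s]) n
  have hea : Real.exp a = Real.exp ((n : ℝ) * s) * (1 / η) := by
    rw [hadef, Real.exp_add, Real.exp_log (by positivity)]
  set T : ℝ :=
    ((volume : Measure (Fin n → Ω)) {x | Real.exp a ≤ ∏ i, g₁ (x i)}).toReal with hTdef
  have hT0 : 0 ≤ T := ENNReal.toReal_nonneg
  have hTη : T ≤ η := by
    have hE := Real.exp_pos ((n : ℝ) * s)
    have key : Real.exp ((n : ℝ) * s) * ((1 / η) * T) ≤ Real.exp ((n : ℝ) * s) * 1 := by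
      rw [mul_one]
      calc Real.exp ((n : ℝ) * s) * ((1 / η) * T)
          = Real.exp a * T := by rw [hea]; ring
        _ ≤ (1 + s) ^ n := hmarkov
        _ ≤ Real.exp ((n : ℝ) * s) := hpow
    have key2 : (1 / η) * T ≤ 1 := le_of_mul_le_mul_left key hE
    calc T = η * ((1 / η) * T) := by field_simp
      _ ≤ η * 1 := mul_le_mul_of_nonneg_left key2 hη0.le
      _ = η := mul_one η
  have hSle : (volume : Measure (Fin n → Ω)) {x | Real.exp a ≤ ∏ i, g₁ (x i)}
      ≤ ENNReal.ofReal η := by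
    rw [← ENNReal.ofReal_toReal (measure_ne_top (volume : Measure (Fin n → Ω)) _)]
    exact ENNReal.ofReal_le_ofReal hTη
  set ν : Measure (Fin n → Ω) := Measure.pi fun _ : Fin n => μ with hν
  set E : Set (Fin n → Ω) :=
    {ω | (1 / (n * ι)) * ∑ i, ψ (ι * |Y (ω i) - ⟪X (ω i), w⟫|) ≤
      L + ι / 2 * M + (1 / (n * ι)) * Real.log (1 / η)} with hEdef
  -- complement inclusion
  have hsub : Eᶜ ⊆ {x | Real.exp a ≤ ∏ i, g₁ (x i)} := by
    intro x hx
    have hx' : L + ι / 2 * M + (1 / (n * ι)) * Real.log (1 / η) <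
        (1 / ((n : ℝ) * ι)) * ∑ i, ψ (ι * |Y (x i) - ⟪X (x i), w⟫|) := by
      simpa [hEdef, not_le] using hx
    have hSum : a < ∑ i, ψ (ι * |Y (x i) - ⟪X (x i), w⟫|) := by
      have hmul := mul_lt_mul_of_pos_left hx' hnι
      calc a = ((n : ℝ) * ι) *
            (L + ι / 2 * M + (1 / (n * ι)) * Real.log (1 / η)) := by
            rw [hadef, hsdef]; field_simp
        _ < ((n : ℝ) * ι) *
            ((1 / ((n : ℝ) * ι)) * ∑ i, ψ (ι * |Y (x i) - ⟪X (x i), w⟫|)) := hmul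
        _ = ∑ i, ψ (ι * |Y (x i) - ⟪X (x i), w⟫|) := by field_simp
    have hlog : ∑ i, ψ (ι * |Y (x i) - ⟪X (x i), w⟫|) ≤ Real.log (∏ i, g₁ (x i)) := by
      rw [Real.log_prod fun i _ => (hg₁pos (x i)).ne']
      exact Finset.sum_le_sum fun i _ => hψg (x i)
    have hprodpos : 0 < ∏ i, g₁ (x i) := Finset.prod_pos fun i _ => hg₁pos (x i)
    exact ((Real.lt_log_iff_exp_lt hprodpos).mp (lt_of_lt_of_le hSum hlog)).le
  have hcompl : ν Eᶜ ≤ ENNReal.ofReal η := le_trans (measure_mono hsub) hSle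
  haveI : IsProbabilityMeasure ν := by
    rw [hν]; infer_instance
  have huniv : (1 : ENNReal) ≤ ν E + ν Eᶜ := by
    calc (1 : ENNReal) = ν Set.univ := (measure_univ).symm
      _ = ν (E ∪ Eᶜ) := by rw [Set.union_compl_self]
      _ ≤ ν E + ν Eᶜ := measure_union_le _ _
  calc ENNReal.ofReal (1 - η) = 1 - ENNReal.ofReal η := by
        rw [ENNReal.ofReal_sub 1 hη0.le, ENNReal.ofReal_one]
    _ ≤ ν E := by
        rw [tsub_le_iff_right]
        calc (1 : ENNReal) ≤ ν E + ν Eᶜ := huniv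
          _ ≤ ν E + ENNReal.ofReal η := add_le_add_right hcompl _
end

section
/- Let (x_i, y_i), i = 1,…,n, be i.i.d. samples from D, let ι > 0, w fixed, and let ψ satisfy ψ(t) ≥ -log(1 - t + t²/2) for t ≥ 0. Then for any η ∈ (0,1), with probability at least 1 - η, (1/(nι)) Σ_{i=1}^n ψ(ι|y_i - ⟨x_i, w⟩|) ≥ L(w) - (ι/2) E(y - ⟨x, w⟩)² - (1/(nι)) log(1/η). -/
open MeasureTheory
open scoped RealInnerProductSpace

/-- One-sided concentration (lower) for the truncated empirical risk. -/
theorem stmt_14 {d : ℕ} (n : ℕ) (hn : 0 < n) {Ω : Type*} [MeasurableSpace Ω]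
    (μ : Measure Ω) [IsProbabilityMeasure μ]
    (X : Ω → EuclideanSpace ℝ (Fin d)) (Y : Ω → ℝ)
    (hXm : Measurable X) (hYm : Measurable Y)
    (w : EuclideanSpace ℝ (Fin d)) (ι : ℝ) (hι : 0 < ι) (ψ : ℝ → ℝ)
    (hψ : ∀ t : ℝ, 0 ≤ t → -Real.log (1 - t + t ^ 2 / 2) ≤ ψ t)
    (hL : Integrable (fun ω => |Y ω - ⟪X ω, w⟫|) μ)
    (h2 : Integrable (fun ω => (Y ω - ⟪X ω, w⟫) ^ 2) μ)
    (η : ℝ) (hη0 : 0 < η) (hη1 : η < 1) :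
    ENNReal.ofReal (1 - η) ≤
      (Measure.pi fun _ : Fin n => μ)
        {ω | (∫ ω', |Y ω' - ⟪X ω', w⟫| ∂μ) -
          ι / 2 * (∫ ω', (Y ω' - ⟪X ω', w⟫) ^ 2 ∂μ) -
          (1 / (n * ι)) * Real.log (1 / η) ≤
          (1 / (n * ι)) * ∑ i, ψ (ι * |Y (ω i) - ⟪X (ω i), w⟫|)} := by
  classical
  letI : MeasureSpace Ω := ⟨μ⟩
  set Z : Ω → ℝ := fun ω' => |Y ω' - ⟪X ω', w⟫| with hZ
  have hZm : Measurable Z := (hYm.sub (Measurable.inner hXm measurable_const)).abs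
  have hZnn : ∀ ω', 0 ≤ Z ω' := fun ω' => abs_nonneg _
  set φ : ℝ → ℝ := fun t => -Real.log (1 - t + t ^ 2 / 2) with hφ
  have hpos : ∀ t : ℝ, 0 < 1 - t + t ^ 2 / 2 := by intro t; nlinarith [sq_nonneg (t - 1)]
  have hexpφ : ∀ t : ℝ, Real.exp (-φ t) = 1 - t + t ^ 2 / 2 := by
    intro t; rw [hφ]; simp [Real.exp_log (hpos t)]
  have hφm : Measurable φ := by
    apply Measurable.neg
    exact Real.measurable_log.comp
      ((measurable_const.sub measurable_id).add ((measurable_id.pow_const 2).div_const 2))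
  set L : ℝ := ∫ ω', |Y ω' - ⟪X ω', w⟫| ∂μ with hLdef
  set M : ℝ := ∫ ω', (Y ω' - ⟪X ω', w⟫) ^ 2 ∂μ with hMdef
  set g : Ω → ℝ := fun ω' => 1 - ι * Z ω' + (ι * Z ω') ^ 2 / 2 with hg
  have hgZ2 : (fun ω' => (ι * Z ω') ^ 2 / 2) = fun ω' => ι ^ 2 / 2 * (Y ω' - ⟪X ω', w⟫) ^ 2 := by
    funext ω'; rw [hZ]; rw [mul_pow, sq_abs]; ring
  have hgint : Integrable g μ := by
    rw [hg]
    apply Integrable.add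
    · exact (integrable_const 1).sub (hL.const_mul ι)
    · rw [hgZ2]; exact h2.const_mul _
  have hgnn : ∀ ω', 0 ≤ g ω' := by
    intro ω'; rw [hg]; nlinarith [sq_nonneg (ι * Z ω' - 1)]
  have hgexp : ∀ ω', g ω' = Real.exp (-φ (ι * Z ω')) := by
    intro ω'; rw [hexpφ]
  have hintg : ∫ ω', g ω' ∂μ = 1 - ι * L + ι ^ 2 / 2 * M := by
    rw [hg]
    have h1 : Integrable (fun ω' => (1 : ℝ) - ι * Z ω') μ :=
      (integrable_const 1).sub (hL.const_mul ι)
    rw [integral_add h1 (by rw [hgZ2]; exact h2.const_mul _)]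
    rw [integral_sub (integrable_const 1) (hL.const_mul ι), integral_const, hgZ2,
      integral_const_mul, integral_const_mul]
    simp [hLdef, hMdef, hZ]
  set c : ℝ := -ι * L + ι ^ 2 / 2 * M with hc
  have hgle : ∫ ω', g ω' ∂μ ≤ Real.exp c := by
    rw [hintg]
    calc 1 - ι * L + ι ^ 2 / 2 * M = c + 1 := by rw [hc]; ring
    _ ≤ Real.exp c := Real.add_one_le_exp c
  set T : ℝ := L - ι / 2 * M - 1 / (n * ι) * Real.log (1 / η) with hT
  set A : ℝ := (n * ι) * T with hA
  have hnι : (0:ℝ) < n * ι := by positivity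
  -- key relation: exp (-A) = exp (n*c) / η
  have hAc : -A = n * c + Real.log (1 / η) := by
    rw [hA, hT, hc]
    field_simp
    ring
  set G : (Fin n → Ω) → ℝ := fun ω => ∏ i, g (ω i) with hG
  have hGint : Integrable G := Integrable.fintype_prod (f := fun _ : Fin n => g) (fun _ => hgint)
  have hGval : ∫ ω, G ω = (∫ ω', g ω' ∂μ) ^ n := by
    rw [hG]
    rw [MeasureTheory.volume_pi, MeasureTheory.integral_fintype_prod_eq_pow (ι := Fin n) g]
    simp [Fintype.card_fin]
    rfl
  have hGnn : ∀ ω, 0 ≤ G ω := fun ω => Finset.prod_nonneg fun i _ => hgnn _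
  -- Markov
  have hmark := mul_meas_ge_le_integral_of_nonneg
    (μ := (volume : Measure (Fin n → Ω))) (Filter.Eventually.of_forall hGnn) hGint (Real.exp (-A))
  have hpi : (Measure.pi fun _ : Fin n => μ) = (volume : Measure (Fin n → Ω)) := by
    rw [MeasureTheory.volume_pi]; rfl
  have hGbound : ∫ ω, G ω ≤ Real.exp (-A) * η := by
    rw [hGval]
    calc (∫ ω', g ω' ∂μ) ^ n ≤ (Real.exp c) ^ n := by
          apply pow_le_pow_left₀ (integral_nonneg hgnn) hgle
    _ = Real.exp (n * c) := by rw [← Real.exp_nat_mul]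
    _ = Real.exp (-A) * η := by
          rw [hAc, Real.exp_add, Real.exp_log (by positivity)]
          field_simp
  have hmeas_bad : (volume : Measure (Fin n → Ω)) {ω | Real.exp (-A) ≤ G ω} ≤ ENNReal.ofReal η := by
    rw [ENNReal.le_ofReal_iff_toReal_le (measure_ne_top _ _) hη0.le]
    have hexp : (0:ℝ) < Real.exp (-A) := Real.exp_pos _
    rw [measureReal_def] at hmark
    nlinarith [hmark, hGbound, ENNReal.toReal_nonneg
      (a := (volume : Measure (Fin n → Ω)) {ω | Real.exp (-A) ≤ G ω})]
  set bad : Set (Fin n → Ω) := {ω | (∑ i, φ (ι * Z (ω i))) < A} with hbad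
  have hbadm : MeasurableSet bad := by
    apply measurableSet_lt
    · exact Finset.measurable_sum _ fun i _ =>
        (hφm.comp ((hZm.comp (measurable_pi_apply i)).const_mul ι))
    · exact measurable_const
  have hbadsub : bad ⊆ {ω | Real.exp (-A) ≤ G ω} := by
    intro ω hω
    have h1 : G ω = Real.exp (-∑ i, φ (ι * Z (ω i))) := by
      rw [hG]
      simp only [hgexp]
      rw [← Real.exp_sum]
      congr 1
      rw [← Finset.sum_neg_distrib]
    have hω' : (∑ i, φ (ι * Z (ω i))) < A := hω
    rw [Set.mem_setOf_eq, h1]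
    exact Real.exp_le_exp.2 (neg_le_neg hω'.le)
  have hbadle : (volume : Measure (Fin n → Ω)) bad ≤ ENNReal.ofReal η :=
    le_trans (measure_mono hbadsub) hmeas_bad
  -- goal set contains badᶜ
  have hsub : badᶜ ⊆ {ω : Fin n → Ω | L - ι / 2 * M - 1 / (n * ι) * Real.log (1 / η) ≤
      1 / (n * ι) * ∑ i, ψ (ι * |Y (ω i) - ⟪X (ω i), w⟫|)} := by
    intro ω hω
    simp only [Set.mem_compl_iff, hbad, Set.mem_setOf_eq, not_lt] at hω
    have hsum : (∑ i, φ (ι * Z (ω i))) ≤ ∑ i, ψ (ι * |Y (ω i) - ⟪X (ω i), w⟫|) := by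
      apply Finset.sum_le_sum
      intro i _
      exact hψ _ (by positivity)
    have h3 : A ≤ ∑ i, ψ (ι * |Y (ω i) - ⟪X (ω i), w⟫|) := le_trans hω hsum
    show T ≤ _
    calc T = 1 / (n * ι) * A := by rw [hA]; field_simp
    _ ≤ _ := by
        apply mul_le_mul_of_nonneg_left h3 (by positivity)
  rw [hpi]
  calc ENNReal.ofReal (1 - η) = 1 - ENNReal.ofReal η := by
        rw [ENNReal.ofReal_sub _ hη0.le, ENNReal.ofReal_one]
  _ ≤ 1 - (volume : Measure (Fin n → Ω)) bad := tsub_le_tsub_left hbadle 1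
  _ = (volume : Measure (Fin n → Ω)) badᶜ := (prob_compl_eq_one_sub hbadm).symm
  _ ≤ _ := measure_mono hsub
end

section
/- Let R be a finite set, u: Datasets × R → ℝ a score function with sensitivity Δu = max_{r∈R} max_{D∼D'} |u(D,r) - u(D',r)|, and let M be the exponential mechanism that outputs r ∈ R with probability proportional to exp(ε u(D,r)/(2Δu)). Then for every t > 0, Pr[u(D, M(D)) ≤ max_{r∈R} u(D,r) - (2Δu/ε)(log|R| + t)] ≤ e^{-t}. -/
open scoped Classical

/-- Utility of the exponential mechanism: for a finite range R and score u with
sensitivity Δu, the mechanism that outputs r with probability proportional to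
exp(ε u(r)/(2Δu)) returns a score below max u - (2Δu/ε)(log|R| + t) with
probability at most e^{-t}. -/
theorem stmt_17 {R : Type*} [Fintype R] [Nonempty R]
    (u : R → ℝ) (Δu ε t : ℝ) (hΔu : 0 < Δu) (hε : 0 < ε) (ht : 0 < t) :
    (∑ r ∈ Finset.univ.filter (fun r : R =>
        u r ≤ (Finset.univ.sup' Finset.univ_nonempty u) -
          (2 * Δu / ε) * (Real.log (Fintype.card R) + t)),
      Real.exp (ε * u r / (2 * Δu))) /
      (∑ r : R, Real.exp (ε * u r / (2 * Δu))) ≤ Real.exp (-t) := by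
  set M := Finset.univ.sup' Finset.univ_nonempty u with hM
  set k := ε / (2 * Δu) with hk
  have hk0 : 0 < k := div_pos hε (by linarith)
  have h2Δ : (2 * Δu) ≠ 0 := by positivity
  set N := (Fintype.card R : ℝ) with hN
  have hN0 : 0 < N := by
    rw [hN]; exact_mod_cast Fintype.card_pos
  have hden : 0 < ∑ r : R, Real.exp (ε * u r / (2 * Δu)) :=
    Finset.sum_pos (fun r _ => Real.exp_pos _) Finset.univ_nonempty
  rw [div_le_iff₀ hden]
  -- denominator lower bound: there is r0 with u r0 = M
  obtain ⟨r0, -, hr0⟩ := Finset.exists_mem_eq_sup' (Finset.univ_nonempty (α := R)) u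
  have hdenM : Real.exp (k * M) ≤ ∑ r : R, Real.exp (ε * u r / (2 * Δu)) := by
    have : Real.exp (ε * u r0 / (2 * Δu)) = Real.exp (k * M) := by
      rw [hk, ← hr0, ← hM]; ring_nf
    calc Real.exp (k * M) = Real.exp (ε * u r0 / (2 * Δu)) := this.symm
      _ ≤ _ := Finset.single_le_sum (f := fun r => Real.exp (ε * u r / (2 * Δu))) (fun r _ => (Real.exp_pos _).le) (Finset.mem_univ r0)
  -- numerator upper bound
  have hnum : (∑ r ∈ Finset.univ.filter (fun r : R =>
        u r ≤ M - (2 * Δu / ε) * (Real.log N + t)),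
      Real.exp (ε * u r / (2 * Δu))) ≤ N * Real.exp (k * (M - (2 * Δu / ε) * (Real.log N + t))) := by
    calc _ ≤ ∑ _r ∈ Finset.univ.filter (fun r : R =>
          u r ≤ M - (2 * Δu / ε) * (Real.log N + t)),
          Real.exp (k * (M - (2 * Δu / ε) * (Real.log N + t))) := by
          apply Finset.sum_le_sum
          intro r hr
          have hu := (Finset.mem_filter.mp hr).2
          apply Real.exp_le_exp.mpr
          have : ε * u r / (2 * Δu) = k * u r := by rw [hk]; ring
          rw [this]
          exact mul_le_mul_of_nonneg_left hu hk0.le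
      _ = (Finset.univ.filter (fun r : R =>
          u r ≤ M - (2 * Δu / ε) * (Real.log N + t))).card *
          Real.exp (k * (M - (2 * Δu / ε) * (Real.log N + t))) := by
          rw [Finset.sum_const, nsmul_eq_mul]
      _ ≤ N * Real.exp (k * (M - (2 * Δu / ε) * (Real.log N + t))) := by
          apply mul_le_mul_of_nonneg_right _ (Real.exp_pos _).le
          rw [hN]
          exact_mod_cast Finset.card_filter_le _ _
  have hkey : k * (M - (2 * Δu / ε) * (Real.log N + t)) = k * M - Real.log N - t := by
    have : k * ((2 * Δu / ε) * (Real.log N + t)) = Real.log N + t := by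
      rw [hk]
      field_simp
    rw [mul_sub, this]; ring
  calc (∑ r ∈ Finset.univ.filter (fun r : R =>
        u r ≤ M - (2 * Δu / ε) * (Real.log N + t)),
      Real.exp (ε * u r / (2 * Δu)))
      ≤ N * Real.exp (k * (M - (2 * Δu / ε) * (Real.log N + t))) := hnum
    _ = Real.exp (-t) * Real.exp (k * M) := by
        rw [hkey, show k * M - Real.log N - t = (-t) + (k * M + (- Real.log N)) by ring,
          Real.exp_add, Real.exp_add, Real.exp_neg (Real.log N), Real.exp_log hN0]
        field_simp
    _ ≤ Real.exp (-t) * ∑ r : R, Real.exp (ε * u r / (2 * Δu)) :=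
        mul_le_mul_of_nonneg_left hdenM (Real.exp_pos _).le
end

section
/- Let (x_i, y_i), i = 1,…,n, be i.i.d. from D, let θ ∈ (1,2), ι > 0, ζ > 0, let ψ be non-decreasing with ψ(t) ≥ -log(1 - t + |t|^θ/θ), and suppose E‖x‖₂ ≤ τ. Then for any fixed w and η ∈ (0,1), with probability at least 1 - η: -(1/(nι)) Σ_{i=1}^n ψ(ι|y_i - ⟨x_i, w⟩| - ιζ‖x_i‖₂) ≤ -L(w) + ζτ + (2ι)^{θ-1}/θ · E|y - ⟨x, w⟩|^θ + (2ι)^{θ-1}ζ^θ/θ · E‖x‖₂^θ + (1/(nι)) log(1/η). -/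
open MeasureTheory
open scoped RealInnerProductSpace


lemma aux_lintegral_pi_pow {Ω : Type*} [MeasurableSpace Ω] (μ : Measure Ω) [SigmaFinite μ]
    {f : Ω → ENNReal} (hf : Measurable f) :
    ∀ n : ℕ, ∫⁻ ω : Fin n → Ω, ∏ i, f (ω i) ∂(Measure.pi fun _ => μ)
      = (∫⁻ x, f x ∂μ) ^ n
  | 0 => by simp [Measure.pi_of_empty]
  | (n + 1) => by
    have hmp := (measurePreserving_piFinSuccAbove (fun _ : Fin (n+1) => μ) 0)
    have hh : Measurable (fun p : Ω × (Fin n → Ω) => f p.1 * ∏ j, f (p.2 j)) := by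
      exact (hf.comp measurable_fst).mul
        (Finset.measurable_prod _ fun j _ => hf.comp ((measurable_pi_apply j).comp measurable_snd))
    have := hmp.lintegral_comp hh
    have heq : ∀ ω : Fin (n+1) → Ω,
        (fun p : Ω × (Fin n → Ω) => f p.1 * ∏ j, f (p.2 j))
          ((MeasurableEquiv.piFinSuccAbove (fun _ => Ω) 0) ω) = ∏ i, f (ω i) := by
      intro ω
      simp only [MeasurableEquiv.piFinSuccAbove]
      rw [Fin.prod_univ_succAbove (fun i => f (ω i)) 0]
      rfl
    calc ∫⁻ ω : Fin (n+1) → Ω, ∏ i, f (ω i) ∂(Measure.pi fun _ => μ)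
        = ∫⁻ p, f p.1 * ∏ j, f (p.2 j)
            ∂(μ.prod (Measure.pi fun _ : Fin n => μ)) := by
          rw [← this]; exact lintegral_congr fun ω => (heq ω).symm
      _ = (∫⁻ x, f x ∂μ) * ∫⁻ ω : Fin n → Ω, ∏ j, f (ω j) ∂(Measure.pi fun _ => μ) :=
          lintegral_prod_mul hf.aemeasurable
            (Finset.measurable_prod _ fun j _ => hf.comp (measurable_pi_apply j)).aemeasurable
      _ = (∫⁻ x, f x ∂μ) ^ (n + 1) := by
          rw [aux_lintegral_pi_pow μ hf n, pow_succ, mul_comm]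

lemma aux_add_rpow {p : ℝ} (hp : 1 ≤ p) {a b : ℝ} (ha : 0 ≤ a) (hb : 0 ≤ b) :
    (a + b) ^ p ≤ 2 ^ (p - 1) * (a ^ p + b ^ p) := by
  have h := NNReal.rpow_add_le_mul_rpow_add_rpow a.toNNReal b.toNNReal hp
  have h' := (NNReal.coe_le_coe).2 h
  push_cast [NNReal.coe_rpow] at h'
  rwa [Real.coe_toNNReal a ha, Real.coe_toNNReal b hb] at h'

lemma aux_gpos {θ : ℝ} (hθ1 : 1 < θ) (s : ℝ) : 0 < 1 - s + |s| ^ θ / θ := by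
  have hθ0 : (0:ℝ) < θ := by linarith
  rcases le_or_gt s 0 with h | h
  · have h1 : (0:ℝ) ≤ |s| ^ θ / θ := by positivity
    linarith
  · rw [abs_of_pos h]
    have hb := one_add_mul_self_le_rpow_one_add (s := s - 1) (by linarith) hθ1.le
    have hb' : 1 + θ * (s - 1) ≤ s ^ θ := by
      have : (1 + (s - 1)) = s := by ring
      rwa [this] at hb
    have hkey : θ - θ * s + s ^ θ ≥ 1 := by nlinarith
    have heq : 1 - s + s ^ θ / θ = (θ - θ * s + s ^ θ) / θ := by
      field_simp
    rw [heq]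
    apply div_pos (by linarith) hθ0


/-- Concentration bound for the shifted truncated loss (θ-th moment case),
used in the proof of Lemma 11 of the paper. -/
theorem stmt_19 {d : ℕ} (n : ℕ) (hn : 0 < n) {Ω : Type*} [MeasurableSpace Ω]
    (μ : Measure Ω) [IsProbabilityMeasure μ]
    (X : Ω → EuclideanSpace ℝ (Fin d)) (Y : Ω → ℝ)
    (hXm : Measurable X) (hYm : Measurable Y)
    (θ ι ζ τ : ℝ) (hθ1 : 1 < θ) (hθ2 : θ < 2) (hι : 0 < ι) (hζ : 0 < ζ)
    (ψ : ℝ → ℝ) (hmono : Monotone ψ)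
    (hψ : ∀ t : ℝ, -Real.log (1 - t + |t| ^ θ / θ) ≤ ψ t)
    (hXnormint : Integrable (fun ω => ‖X ω‖) μ)
    (hτ : ∫ ω, ‖X ω‖ ∂μ ≤ τ)
    (w : EuclideanSpace ℝ (Fin d))
    (hL : Integrable (fun ω => |Y ω - ⟪X ω, w⟫|) μ)
    (hθint : Integrable (fun ω => |Y ω - ⟪X ω, w⟫| ^ θ) μ)
    (hXθint : Integrable (fun ω => ‖X ω‖ ^ θ) μ)
    (η : ℝ) (hη0 : 0 < η) (hη1 : η < 1) :
    ENNReal.ofReal (1 - η) ≤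
      (Measure.pi fun _ : Fin n => μ)
        {ω | -((1 / (n * ι)) *
            ∑ i, ψ (ι * |Y (ω i) - ⟪X (ω i), w⟫| - ι * ζ * ‖X (ω i)‖)) ≤
          -(∫ ω', |Y ω' - ⟪X ω', w⟫| ∂μ) + ζ * τ +
          (2 * ι) ^ (θ - 1) / θ * (∫ ω', |Y ω' - ⟪X ω', w⟫| ^ θ ∂μ) +
          (2 * ι) ^ (θ - 1) * ζ ^ θ / θ * (∫ ω', ‖X ω'‖ ^ θ ∂μ) +
          (1 / (n * ι)) * Real.log (1 / η)} := by
  have hθ0 : (0:ℝ) < θ := by linarith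
  have hn' : (0:ℝ) < (n:ℝ) := by exact_mod_cast hn
  have hnι : (0:ℝ) < (n:ℝ) * ι := mul_pos hn' hι
  -- abbreviations
  set Δ : Ω → ℝ := fun ω => |Y ω - ⟪X ω, w⟫| with hΔdef
  set t : Ω → ℝ := fun ω => ι * Δ ω - ι * ζ * ‖X ω‖ with htdef
  set L : ℝ := ∫ ω', |Y ω' - ⟪X ω', w⟫| ∂μ with hLdef
  set M1 : ℝ := ∫ ω', |Y ω' - ⟪X ω', w⟫| ^ θ ∂μ with hM1def
  set M2 : ℝ := ∫ ω', ‖X ω'‖ ^ θ ∂μ with hM2def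
  set T : ℝ := ∫ ω', ‖X ω'‖ ∂μ with hTdef
  set u : ℝ := -(ι*L) + ι*ζ*τ + 2^(θ-1)*ι^θ/θ*M1 + 2^(θ-1)*ι^θ*ζ^θ/θ*M2 with hudef
  set B : ℝ := -L + ζ * τ + (2 * ι) ^ (θ - 1) / θ * M1 +
      (2 * ι) ^ (θ - 1) * ζ ^ θ / θ * M2 + (1 / (↑n * ι)) * Real.log (1 / η) with hBdef
  -- measurability
  have hinner : Measurable fun ω => ⟪X ω, w⟫ := hXm.inner measurable_const
  have hΔm : Measurable Δ := (hYm.sub hinner).abs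
  have hXn : Measurable fun ω => ‖X ω‖ := hXm.norm
  have htm : Measurable t := (hΔm.const_mul ι).sub (hXn.const_mul (ι*ζ))
  have hψm : Measurable ψ := hmono.measurable
  set F : Ω → ENNReal := fun x => ENNReal.ofReal (Real.exp (-(ψ (t x)))) with hFdef
  have hFm : Measurable F :=
    (Real.measurable_exp.comp ((hψm.comp htm).neg)).ennreal_ofReal
  set g : Ω → ℝ := fun ω => 1 - t ω + |t ω| ^ θ / θ with hgdef
  -- pointwise exp bound
  have hpt : ∀ ω, Real.exp (-(ψ (t ω))) ≤ g ω := by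
    intro ω
    have h1 := hψ (t ω)
    have h2 : -ψ (t ω) ≤ Real.log (g ω) := by simp only [hgdef]; linarith
    calc Real.exp (-(ψ (t ω))) ≤ Real.exp (Real.log (g ω)) := Real.exp_le_exp.2 h2
      _ = g ω := Real.exp_log (aux_gpos hθ1 _)
  -- integrability
  have hti : Integrable t μ := (hL.const_mul ι).sub (hXnormint.const_mul (ι*ζ))
  set D : Ω → ℝ := fun ω => 2^(θ-1) * (ι^θ * Δ ω^θ + (ι*ζ)^θ * ‖X ω‖^θ) with hDdef
  have hDi : Integrable D μ :=
    (((hθint.const_mul (ι^θ)).add (hXθint.const_mul ((ι*ζ)^θ))).const_mul (2^(θ-1)))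
  have hIZ : ∀ ω, (0:ℝ) ≤ ι * ζ * ‖X ω‖ := fun ω => by positivity
  have hID : ∀ ω, (0:ℝ) ≤ ι * Δ ω := fun ω => mul_nonneg hι.le (abs_nonneg _)
  have hbound : ∀ ω, |t ω| ^ θ ≤ D ω := by
    intro ω
    have habs : |t ω| ≤ ι * Δ ω + ι * ζ * ‖X ω‖ := by
      have h1 := hID ω
      have h2 := hIZ ω
      simp only [htdef]
      rw [abs_le]
      constructor <;> nlinarith
    calc |t ω| ^ θ ≤ (ι * Δ ω + ι * ζ * ‖X ω‖) ^ θ :=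
          Real.rpow_le_rpow (abs_nonneg _) habs hθ0.le
      _ ≤ 2^(θ-1) * ((ι * Δ ω) ^ θ + (ι * ζ * ‖X ω‖) ^ θ) :=
          aux_add_rpow hθ1.le (hID ω) (hIZ ω)
      _ = D ω := by
          rw [Real.mul_rpow hι.le (abs_nonneg _),
            Real.mul_rpow (mul_nonneg hι.le hζ.le) (norm_nonneg _)]
  have htθi : Integrable (fun ω => |t ω| ^ θ) μ := by
    refine hDi.mono' ((htm.abs.pow_const θ).aestronglyMeasurable) ?_
    filter_upwards with ω
    rw [Real.norm_eq_abs, abs_of_nonneg (Real.rpow_nonneg (abs_nonneg _) _)]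
    exact hbound ω
  have hone_sub : Integrable (fun ω => 1 - t ω) μ := (integrable_const 1).sub hti
  have hdivθ : Integrable (fun ω => |t ω| ^ θ / θ) μ := htθi.div_const θ
  have hgi : Integrable g μ := hone_sub.add hdivθ
  -- integral of g
  have hgint : ∫ ω, g ω ∂μ = 1 - (∫ ω, t ω ∂μ) + (∫ ω, |t ω| ^ θ ∂μ) / θ := by
    rw [integral_add hone_sub hdivθ, integral_sub (integrable_const 1) hti,
      integral_const, integral_div]
    simp
  have htint : ∫ ω, t ω ∂μ = ι * L - ι * ζ * T := by
    rw [htdef, integral_sub (hL.const_mul ι) (hXnormint.const_mul (ι*ζ)),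
      integral_const_mul, integral_const_mul, hLdef, hTdef]
  have htθint_le : ∫ ω, |t ω| ^ θ ∂μ ≤ 2^(θ-1) * (ι^θ * M1 + (ι*ζ)^θ * M2) := by
    calc ∫ ω, |t ω| ^ θ ∂μ ≤ ∫ ω, D ω ∂μ := integral_mono htθi hDi hbound
      _ = 2^(θ-1) * (ι^θ * M1 + (ι*ζ)^θ * M2) := by
          rw [hDdef]
          simp only [integral_const_mul]
          rw [integral_add (hθint.const_mul (ι^θ)) (hXθint.const_mul ((ι*ζ)^θ)),
            integral_const_mul, integral_const_mul, hM1def, hM2def]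
  have hM1nn : 0 ≤ M1 := integral_nonneg fun ω => Real.rpow_nonneg (abs_nonneg _) _
  have hM2nn : 0 ≤ M2 := integral_nonneg fun ω => Real.rpow_nonneg (norm_nonneg _) _
  have hmulrpow : (ι*ζ)^θ = ι^θ * ζ^θ := Real.mul_rpow hι.le hζ.le
  have hgle : ∫ ω, g ω ∂μ ≤ 1 + u := by
    rw [hgint, htint]
    have h1 : ι * ζ * T ≤ ι * ζ * τ :=
      mul_le_mul_of_nonneg_left hτ (by positivity)
    have h2 : (∫ ω, |t ω| ^ θ ∂μ) / θ ≤ (2^(θ-1) * (ι^θ * M1 + (ι*ζ)^θ * M2)) / θ := by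
      gcongr
    rw [hmulrpow] at h2
    have hexpand : (2^(θ-1) * (ι^θ * M1 + ι^θ * ζ^θ * M2)) / θ
        = 2^(θ-1)*ι^θ/θ*M1 + 2^(θ-1)*ι^θ*ζ^θ/θ*M2 := by ring
    rw [hexpand] at h2
    rw [hudef]
    linarith
  -- lintegral bound
  have hgnn : ∀ ω, 0 ≤ g ω := fun ω => (aux_gpos hθ1 (t ω)).le
  have hlint : ∫⁻ x, F x ∂μ ≤ ENNReal.ofReal (Real.exp u) := by
    calc ∫⁻ x, F x ∂μ ≤ ∫⁻ x, ENNReal.ofReal (g x) ∂μ :=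
          lintegral_mono fun x => ENNReal.ofReal_le_ofReal (hpt x)
      _ = ENNReal.ofReal (∫ x, g x ∂μ) :=
          (MeasureTheory.ofReal_integral_eq_lintegral_ofReal hgi
            (Filter.Eventually.of_forall hgnn)).symm
      _ ≤ ENNReal.ofReal (Real.exp u) := by
          apply ENNReal.ofReal_le_ofReal
          calc ∫ x, g x ∂μ ≤ 1 + u := hgle
            _ ≤ Real.exp u := by linarith [Real.add_one_le_exp u]
  -- product bound
  have hprodle : ∫⁻ ω : Fin n → Ω, ∏ i, F (ω i) ∂(Measure.pi fun _ : Fin n => μ)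
      ≤ ENNReal.ofReal (Real.exp ((n:ℝ) * u)) := by
    rw [aux_lintegral_pi_pow μ hFm n]
    calc (∫⁻ x, F x ∂μ) ^ n ≤ ENNReal.ofReal (Real.exp u) ^ n :=
          pow_le_pow_left' hlint n
      _ = ENNReal.ofReal (Real.exp u ^ n) :=
          (ENNReal.ofReal_pow (Real.exp_nonneg u) n).symm
      _ = ENNReal.ofReal (Real.exp ((n:ℝ) * u)) := by rw [Real.exp_nat_mul]
  -- key algebraic identity
  have hpowid : ι * (2*ι)^(θ-1) = 2^(θ-1) * ι^θ := by
    rw [Real.mul_rpow (by norm_num) hι.le]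
    have : ι ^ θ = ι ^ (1:ℝ) * ι ^ (θ - 1) := by
      rw [← Real.rpow_add hι]
      norm_num
    rw [this, Real.rpow_one]
    ring
  have hBeq : (n:ℝ) * ι * B = (n:ℝ) * u + Real.log (1/η) := by
    have hstep : (n:ℝ) * ι * B
        = (n:ℝ) * (-(ι*L) + ι*ζ*τ + (ι*(2*ι)^(θ-1))/θ*M1 + (ι*(2*ι)^(θ-1))*ζ^θ/θ*M2)
          + ((n:ℝ) * ι) * ((1/((n:ℝ)*ι)) * Real.log (1/η)) := by
      rw [hBdef]; push_cast; ring
    rw [hstep, hpowid, hudef]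
    field_simp
  have hexpeq : Real.exp ((n:ℝ) * u) = η * Real.exp ((n:ℝ) * ι * B) := by
    rw [hBeq, Real.exp_add]
    rw [Real.exp_log (by positivity : (0:ℝ) < 1/η)]
    field_simp
  -- Markov
  set ε : ENNReal := ENNReal.ofReal (Real.exp ((n:ℝ) * ι * B)) with hεdef
  have hε0 : ε ≠ 0 := by
    simp only [hεdef, ne_eq, ENNReal.ofReal_eq_zero, not_le]
    exact Real.exp_pos _
  have hεtop : ε ≠ ⊤ := ENNReal.ofReal_ne_top
  set A : Set (Fin n → Ω) := {ω | ε ≤ ∏ i, F (ω i)} with hAdef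
  have hprodm : Measurable fun ω : Fin n → Ω => ∏ i, F (ω i) :=
    Finset.measurable_prod _ fun i _ => hFm.comp (measurable_pi_apply i)
  have hAm : MeasurableSet A := measurableSet_le measurable_const hprodm
  have hbad : (Measure.pi fun _ : Fin n => μ) A ≤ ENNReal.ofReal η := by
    have hmark := mul_meas_ge_le_lintegral₀ (μ := Measure.pi fun _ : Fin n => μ)
      hprodm.aemeasurable ε
    have h1 : ε * (Measure.pi fun _ : Fin n => μ) A
        ≤ ENNReal.ofReal η * ε := by
      refine hmark.trans (hprodle.trans ?_)
      rw [hexpeq, ENNReal.ofReal_mul hη0.le]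
    rw [mul_comm] at h1
    exact (ENNReal.mul_le_mul_iff_left hε0 hεtop).1 h1
  -- the good set contains Aᶜ
  have hsub : Aᶜ ⊆ {ω : Fin n → Ω | -((1 / (↑n * ι)) *
      ∑ i, ψ (ι * |Y (ω i) - ⟪X (ω i), w⟫| - ι * ζ * ‖X (ω i)‖)) ≤ B} := by
    intro ω hω
    simp only [hAdef, Set.mem_compl_iff, Set.mem_setOf_eq, not_le] at hω
    have hprodeq : ∏ i, F (ω i)
        = ENNReal.ofReal (Real.exp (∑ i, -(ψ (t (ω i))))) := by
      rw [Real.exp_sum, ENNReal.ofReal_prod_of_nonneg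
        (fun i _ => (Real.exp_nonneg _))]
    rw [hprodeq, hεdef] at hω
    have hlt : Real.exp (∑ i, -(ψ (t (ω i)))) < Real.exp ((n:ℝ) * ι * B) :=
      (ENNReal.ofReal_lt_ofReal_iff (Real.exp_pos _)).1 hω
    have hlt2 : ∑ i, -(ψ (t (ω i))) < (n:ℝ) * ι * B := Real.exp_lt_exp.1 hlt
    rw [Finset.sum_neg_distrib] at hlt2
    show -((1 / (↑n * ι)) * ∑ i, ψ (t (ω i))) ≤ B
    rw [← mul_neg, one_div, inv_mul_le_iff₀ hnι]
    linarith
  -- conclude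
  calc ENNReal.ofReal (1 - η) = 1 - ENNReal.ofReal η := by
        rw [← ENNReal.ofReal_one, ← ENNReal.ofReal_sub _ hη0.le]
    _ ≤ 1 - (Measure.pi fun _ : Fin n => μ) A := tsub_le_tsub_left hbad 1
    _ = (Measure.pi fun _ : Fin n => μ) Aᶜ := by
        rw [measure_compl hAm (measure_ne_top _ _), measure_univ]
    _ ≤ _ := measure_mono hsub
end
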